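/- Let B₃ be a rank-3 distribution on a 5-manifold N with [B₃,B₃] of rank 4 or 5 and [B₃,[B₃,B₃]] = TN, and suppose there is a rank-1 subdistribution B₁ ⊂ B₃ with [B₁,B₃] of rank 4 and [B₁,[B₁,B₃]] = TN. Then there exists a unique rank-2 subdistribution B₂ with B₁ ⊆ B₂ ⊆ B₃ and [B₂,B₂] ⊆ B₃, given pointwise by B₂(x) = {v ∈ B₃(x) : [X, V](x) ∈ B₃(x) for V extending v}, where X spans B₁. -/

import Mathlib

/-- The Lie bracket of vector fields on a normed space. -/
noncomputable def vfLie {E : Type*} [NormedAddCommGroup E] [NormedSpace ℝ E]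
    (V W : E → E) : E → E :=
  fun x => fderiv ℝ W x (V x) - fderiv ℝ V x (W x)

set_option maxHeartbeats 1000000
set_option synthInstance.maxHeartbeats 200000

namespace Stmt13Aux

abbrev E5 : Type := Fin 5 → ℝ

lemma range_fin3 {α : Type*} (f : Fin 3 → α) : Set.range f = {f 0, f 1, f 2} := by
  ext x
  constructor
  · rintro ⟨i, rfl⟩; fin_cases i <;> simp
  · rintro (rfl | rfl | rfl) <;> exact ⟨_, rfl⟩

lemma range_fin2 {α : Type*} (f : Fin 2 → α) : Set.range f = {f 0, f 1} := by
  ext x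
  constructor
  · rintro ⟨i, rfl⟩; fin_cases i <;> simp
  · rintro (rfl | rfl) <;> exact ⟨_, rfl⟩

lemma range_triple {α : Type*} (a b c : α) : Set.range ![a, b, c] = {a, b, c} := by
  ext x; simp [Matrix.range_cons, Matrix.range_empty]; tauto

lemma range_pair {α : Type*} (a b : α) : Set.range ![a, b] = {a, b} := by
  ext x; simp [Matrix.range_cons, Matrix.range_empty]; tauto

lemma vfLie_self (V : E5 → E5) (x : E5) : vfLie V V x = 0 := by simp [vfLie]

noncomputable def lc (w : Fin 3 → E5) : (Fin 3 → ℝ) →ₗ[ℝ] E5 where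
  toFun c := ∑ j, c j • w j
  map_add' c d := by simp [add_smul, Finset.sum_add_distrib]
  map_smul' r c := by simp [Finset.smul_sum, mul_smul]

lemma lc_apply (w : Fin 3 → E5) (c : Fin 3 → ℝ) : lc w c = ∑ j, c j • w j := rfl

lemma lc_single (w : Fin 3 → E5) (i : Fin 3) : lc w (Pi.single i 1) = w i := by
  rw [lc_apply]
  rw [Finset.sum_eq_single i]
  · simp
  · intro b _ hb; simp [Pi.single_apply, hb]
  · simp

lemma lc_ker (w : Fin 3 → E5) (h : LinearIndependent ℝ w) : LinearMap.ker (lc w) = ⊥ := by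
  rw [LinearMap.ker_eq_bot']
  intro c hc
  exact funext fun i => Fintype.linearIndependent_iff.mp h c hc i

lemma lc_inj (w : Fin 3 → E5) (h : LinearIndependent ℝ w) : Function.Injective (lc w) :=
  LinearMap.ker_eq_bot.mp (lc_ker w h)

lemma lc_range (w : Fin 3 → E5) :
    LinearMap.range (lc w) = Submodule.span ℝ (Set.range w) := by
  apply le_antisymm
  · rintro x ⟨c, rfl⟩
    rw [lc_apply]
    exact Submodule.sum_mem _ fun j _ =>
      Submodule.smul_mem _ _ (Submodule.subset_span (Set.mem_range_self j))
  · rw [Submodule.span_le]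
    rintro x ⟨i, rfl⟩
    exact ⟨Pi.single i 1, lc_single w i⟩

lemma coords_unique (w : Fin 3 → E5) (h : LinearIndependent ℝ w) (c d : Fin 3 → ℝ)
    (hcd : ∑ j, c j • w j = ∑ j, d j • w j) : c = d := by
  have : lc w c = lc w d := hcd
  exact lc_inj w h this

lemma exists_coeffs (V : Fin 3 → E5 → E5) (hV : ∀ i, ContDiff ℝ (⊤ : ℕ∞) (V i))
    (p : E5) (hip : LinearIndependent ℝ (fun i => V i p))
    (A : E5 → E5) (hA : ContDiff ℝ (⊤ : ℕ∞) A)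
    (hAsec : ∀ q, A q ∈ Submodule.span ℝ (Set.range fun i => V i q)) :
    ∃ a : E5 → (Fin 3 → ℝ), DifferentiableAt ℝ a p ∧
      ∀ᶠ q in nhds p, A q = ∑ j, a q j • V j q := by
  obtain ⟨π, hπ⟩ := (lc (fun i => V i p)).exists_leftInverse_of_injective (lc_ker _ hip)
  set πc : E5 →L[ℝ] (Fin 3 → ℝ) := LinearMap.toContinuousLinearMap π with hπc
  have hπc_apply : ∀ x, πc x = π x := fun x => rfl
  set T : E5 → ((Fin 3 → ℝ) →L[ℝ] (Fin 3 → ℝ)) := fun q => ∑ j,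
    ContinuousLinearMap.smulRightL ℝ (Fin 3 → ℝ) (Fin 3 → ℝ)
      (ContinuousLinearMap.proj j) (πc (V j q)) with hT
  have hTapp : ∀ q c, T q c = πc (∑ j, c j • V j q) := by
    intro q c
    simp only [hT, ContinuousLinearMap.sum_apply, map_sum, map_smul]
    exact Finset.sum_congr rfl fun d _ => rfl
  have hT1 : T p = 1 := by
    apply ContinuousLinearMap.ext
    intro c
    rw [ContinuousLinearMap.one_apply, hTapp, ← lc_apply, hπc_apply]
    have := LinearMap.ext_iff.mp hπ c
    simpa using this
  have hTsmooth : ContDiff ℝ (⊤ : ℕ∞) T := by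
    apply ContDiff.sum
    intro j _
    exact (ContinuousLinearMap.smulRightL ℝ (Fin 3 → ℝ) (Fin 3 → ℝ)
      (ContinuousLinearMap.proj j)).contDiff.comp (πc.contDiff.comp (hV j))
  have hUnit : ∀ᶠ q in nhds p, IsUnit (T q) := by
    have h : ∀ᶠ q in nhds p, T q ∈ {x : (Fin 3 → ℝ) →L[ℝ] (Fin 3 → ℝ) | IsUnit x} :=
      hTsmooth.continuous.continuousAt.eventually_mem
        (Units.isOpen.mem_nhds (by rw [hT1]; exact isUnit_one))
    exact h
  refine ⟨fun q => Ring.inverse (T q) (πc (A q)), ?_, ?_⟩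
  · have h1 : ContDiffAt ℝ (⊤ : ℕ∞) (fun q => Ring.inverse (T q)) p := by
      have := (contDiffAt_ringInverse ℝ (n := (⊤ : ℕ∞))
        (1 : ((Fin 3 → ℝ) →L[ℝ] (Fin 3 → ℝ))ˣ))
      rw [Units.val_one, ← hT1] at this
      exact this.comp p hTsmooth.contDiffAt
    exact (h1.clm_apply ((πc.contDiff.comp hA).contDiffAt)).differentiableAt
      (by simp)
  · filter_upwards [hUnit] with q hq
    obtain ⟨c, hc⟩ := (Submodule.mem_span_range_iff_exists_fun ℝ).mp (hAsec q)
    have h2 : Ring.inverse (T q) (πc (A q)) = c := by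
      rw [← hc, ← hTapp, ← ContinuousLinearMap.comp_apply, ← ContinuousLinearMap.mul_def,
        Ring.inverse_mul_cancel _ hq, ContinuousLinearMap.one_apply]
    rw [h2, hc]

lemma fderiv_comb (V : Fin 3 → E5 → E5) (hV : ∀ i, ContDiff ℝ (⊤ : ℕ∞) (V i))
    (p : E5) (a : E5 → Fin 3 → ℝ) (ha : DifferentiableAt ℝ a p)
    (A : E5 → E5) (hev : ∀ᶠ q in nhds p, A q = ∑ j, a q j • V j q) (u : E5) :
    fderiv ℝ A p u = ∑ j, (fderiv ℝ a p u j) • V j p + ∑ j, a p j • fderiv ℝ (V j) p u := by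
  have hev' : A =ᶠ[nhds p] fun q => ∑ j, a q j • V j q := hev
  have hD : ∀ j : Fin 3, HasFDerivAt (fun q => a q j • V j q)
      (a p j • fderiv ℝ (V j) p +
        ((ContinuousLinearMap.proj j).comp (fderiv ℝ a p)).smulRight (V j p)) p := by
    intro j
    have h1 : HasFDerivAt (fun q => a q j) ((ContinuousLinearMap.proj j).comp (fderiv ℝ a p)) p :=
      ((ContinuousLinearMap.proj (R := ℝ) (φ := fun _ : Fin 3 => ℝ) j).hasFDerivAt.comp p
        ha.hasFDerivAt :
          HasFDerivAt (fun q => (ContinuousLinearMap.proj j : (Fin 3 → ℝ) →L[ℝ] ℝ) (a q)) _ p)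
    have h2 : HasFDerivAt (V j) (fderiv ℝ (V j) p) p :=
      ((hV j).differentiable (by simp) p).hasFDerivAt
    exact h1.smul h2
  have hsum : HasFDerivAt (fun q => ∑ j, a q j • V j q)
      (∑ j, (a p j • fderiv ℝ (V j) p +
        ((ContinuousLinearMap.proj j).comp (fderiv ℝ a p)).smulRight (V j p))) p :=
    HasFDerivAt.fun_sum fun j _ => hD j
  rw [hev'.fderiv_eq, hsum.fderiv]
  simp only [ContinuousLinearMap.sum_apply, ContinuousLinearMap.add_apply,
    ContinuousLinearMap.smul_apply, ContinuousLinearMap.smulRight_apply,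
    ContinuousLinearMap.comp_apply, ContinuousLinearMap.proj_apply]
  rw [Finset.sum_add_distrib, add_comm]

lemma tensorial (V : Fin 3 → E5 → E5) (hV : ∀ i, ContDiff ℝ (⊤ : ℕ∞) (V i))
    (p : E5) (hip : LinearIndependent ℝ (fun i => V i p))
    (A : E5 → E5) (hA : ContDiff ℝ (⊤ : ℕ∞) A)
    (hAsec : ∀ q, A q ∈ Submodule.span ℝ (Set.range fun i => V i q))
    (B : E5 → E5) (c : Fin 3 → ℝ) (hc : ∑ j, c j • V j p = A p) :
    vfLie A B p - ∑ j, c j • vfLie (V j) B p ∈ Submodule.span ℝ (Set.range fun i => V i p) := by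
  obtain ⟨a, ha, hev⟩ := exists_coeffs V hV p hip A hA hAsec
  have hap : A p = ∑ j, a p j • V j p := hev.self_of_nhds
  have hca : c = fun j => a p j := coords_unique _ hip _ _ (by rw [hc, ← hap])
  have key : vfLie A B p - ∑ j, c j • vfLie (V j) B p
      = -∑ j, (fderiv ℝ a p (B p) j) • V j p := by
    have h1 : fderiv ℝ B p (A p) = ∑ j, a p j • fderiv ℝ B p (V j p) := by
      rw [hap, map_sum]
      exact Finset.sum_congr rfl fun j _ => (fderiv ℝ B p).map_smul _ _
    have h2 := fderiv_comb V hV p a ha A hev (B p)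
    simp only [vfLie, hca]
    rw [h1, h2]
    simp only [smul_sub, Finset.sum_sub_distrib]
    abel
  rw [key]
  exact Submodule.neg_mem _ (Submodule.sum_mem _ fun j _ =>
    Submodule.smul_mem _ _ (Submodule.subset_span (Set.mem_range_self j)))

lemma vfLie_sum_right (Xf : E5 → E5) (V : Fin 3 → E5 → E5) (p : E5)
    (hV : ∀ j, DifferentiableAt ℝ (V j) p) (c : Fin 3 → ℝ) :
    vfLie Xf (fun q => ∑ j, c j • V j q) p = ∑ j, c j • vfLie Xf (V j) p := by
  have hs : HasFDerivAt (fun q => ∑ j, c j • V j q) (∑ j, c j • fderiv ℝ (V j) p) p :=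
    HasFDerivAt.fun_sum fun j _ => ((hV j).hasFDerivAt).const_smul (c j)
  simp only [vfLie]
  rw [hs.fderiv]
  simp [ContinuousLinearMap.sum_apply, ContinuousLinearMap.smul_apply, map_sum, map_smul,
    smul_sub, Finset.sum_sub_distrib]

lemma vfLie_comb_right (Xf A B : E5 → E5) (p : E5)
    (hA : DifferentiableAt ℝ A p) (hB : DifferentiableAt ℝ B p) (s t : ℝ) :
    vfLie Xf (fun q => s • A q + t • B q) p = s • vfLie Xf A p + t • vfLie Xf B p := by
  have hs : HasFDerivAt (fun q => s • A q + t • B q) (s • fderiv ℝ A p + t • fderiv ℝ B p) p :=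
    (hA.hasFDerivAt.const_smul s).add (hB.hasFDerivAt.const_smul t)
  simp only [vfLie]
  rw [hs.fderiv]
  simp only [ContinuousLinearMap.add_apply, ContinuousLinearMap.smul_apply, map_add, map_smul,
    smul_sub]
  abel

noncomputable def qmap (L : Fin 3 → Fin 3 → E5) : (Fin 3 → ℝ) →ₗ[ℝ] (Fin 3 → ℝ) →ₗ[ℝ] E5 :=
  LinearMap.mk₂ ℝ (fun c d => ∑ i, ∑ j, (c i * d j) • L i j)
    (fun c c' d => by simp [add_mul, add_smul, Finset.sum_add_distrib])
    (fun s c d => by simp [Finset.smul_sum, smul_smul, mul_assoc])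
    (fun c d d' => by simp [mul_add, add_smul, Finset.sum_add_distrib])
    (fun s c d => by simp [Finset.smul_sum, smul_smul, mul_left_comm])

lemma qmap_apply (L : Fin 3 → Fin 3 → E5) (c d : Fin 3 → ℝ) :
    qmap L c d = ∑ i, ∑ j, (c i * d j) • L i j := rfl

lemma qmap_anti (L : Fin 3 → Fin 3 → E5) (hL : ∀ i j, L i j = -L j i) (c d : Fin 3 → ℝ) :
    qmap L c d = -qmap L d c := by
  calc qmap L c d = ∑ j, ∑ i, (c i * d j) • L i j := by rw [qmap_apply]; exact Finset.sum_comm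
    _ = ∑ j, ∑ i, -((d j * c i) • L j i) := by
        refine Finset.sum_congr rfl fun j _ => Finset.sum_congr rfl fun i _ => ?_
        rw [hL i j, smul_neg, mul_comm]
    _ = -∑ j, ∑ i, (d j * c i) • L j i := by
        simp [Finset.sum_neg_distrib]
    _ = -qmap L d c := by rw [qmap_apply]

lemma qmap_self (L : Fin 3 → Fin 3 → E5) (hL : ∀ i j, L i j = -L j i) (c : Fin 3 → ℝ) :
    qmap L c c = 0 := by
  have h := qmap_anti L hL c c
  have h2 : qmap L c c + qmap L c c = 0 := by nth_rewrite 1 [h]; exact neg_add_cancel _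
  rw [← two_smul ℝ] at h2
  exact (smul_eq_zero.mp h2).resolve_left (by norm_num)

end Stmt13Aux

open Stmt13Aux

/-- Lemma 6(3) in a local model on `ℝ⁵`: if `B₃ = span{V₁,V₂,V₃}` is a rank-3
distribution with `[B₃,B₃]` of rank 4 or 5 and `[B₃,[B₃,B₃]] = TN`, and
`B₁ = span{X} ⊂ B₃` satisfies `rk[B₁,B₃] = 4` and `[B₁,[B₁,B₃]] = TN`, then there
is a unique rank-2 subdistribution `B₂` with `B₁ ⊆ B₂ ⊆ B₃` and `[B₂,B₂] ⊆ B₃`,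
given pointwise by `B₂(x) = {v ∈ B₃(x) : [X,V](x) ∈ B₃(x) for all sections V of B₃
extending v}`. -/
theorem stmt_13 (V₁ V₂ V₃ X : (Fin 5 → ℝ) → (Fin 5 → ℝ))
    (hV₁ : ContDiff ℝ (⊤ : ℕ∞) V₁) (hV₂ : ContDiff ℝ (⊤ : ℕ∞) V₂)
    (hV₃ : ContDiff ℝ (⊤ : ℕ∞) V₃) (hX : ContDiff ℝ (⊤ : ℕ∞) X)
    (hind : ∀ p, LinearIndependent ℝ ![V₁ p, V₂ p, V₃ p])
    (hXmem : ∀ p, X p ∈ Submodule.span ℝ {V₁ p, V₂ p, V₃ p})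
    (hX0 : ∀ p, X p ≠ 0)
    (hder : ∀ p, Module.finrank ℝ (Submodule.span ℝ
        {V₁ p, V₂ p, V₃ p, vfLie V₁ V₂ p, vfLie V₁ V₃ p, vfLie V₂ V₃ p}) = 4 ∨
      Module.finrank ℝ (Submodule.span ℝ
        {V₁ p, V₂ p, V₃ p, vfLie V₁ V₂ p, vfLie V₁ V₃ p, vfLie V₂ V₃ p}) = 5)
    (hfull : ∀ p, Submodule.span ℝ
        ({V₁ p, V₂ p, V₃ p, vfLie V₁ V₂ p, vfLie V₁ V₃ p, vfLie V₂ V₃ p,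
          vfLie V₁ (vfLie V₁ V₂) p, vfLie V₁ (vfLie V₁ V₃) p, vfLie V₁ (vfLie V₂ V₃) p,
          vfLie V₂ (vfLie V₁ V₂) p, vfLie V₂ (vfLie V₁ V₃) p, vfLie V₂ (vfLie V₂ V₃) p,
          vfLie V₃ (vfLie V₁ V₂) p, vfLie V₃ (vfLie V₁ V₃) p, vfLie V₃ (vfLie V₂ V₃) p} :
          Set (Fin 5 → ℝ)) = ⊤)
    (hB₁B₃ : ∀ p, Module.finrank ℝ (Submodule.span ℝ
        {V₁ p, V₂ p, V₃ p, vfLie X V₁ p, vfLie X V₂ p, vfLie X V₃ p}) = 4)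
    (hB₁B₄ : ∀ p, Submodule.span ℝ
        ({V₁ p, V₂ p, V₃ p, vfLie X V₁ p, vfLie X V₂ p, vfLie X V₃ p,
          vfLie X (vfLie X V₁) p, vfLie X (vfLie X V₂) p, vfLie X (vfLie X V₃) p} :
          Set (Fin 5 → ℝ)) = ⊤) :
    ∃ W : (Fin 5 → ℝ) → Submodule ℝ (Fin 5 → ℝ),
      (∀ p, (W p : Set (Fin 5 → ℝ)) =
        {v | v ∈ Submodule.span ℝ {V₁ p, V₂ p, V₃ p} ∧
          ∀ A : (Fin 5 → ℝ) → (Fin 5 → ℝ), ContDiff ℝ (⊤ : ℕ∞) A →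
            (∀ q, A q ∈ Submodule.span ℝ {V₁ q, V₂ q, V₃ q}) → A p = v →
            vfLie X A p ∈ Submodule.span ℝ {V₁ p, V₂ p, V₃ p}}) ∧
      (∀ p, Module.finrank ℝ (W p) = 2) ∧
      (∀ p, X p ∈ W p) ∧
      (∀ p, W p ≤ Submodule.span ℝ {V₁ p, V₂ p, V₃ p}) ∧
      (∀ A B : (Fin 5 → ℝ) → (Fin 5 → ℝ), ContDiff ℝ (⊤ : ℕ∞) A →
        ContDiff ℝ (⊤ : ℕ∞) B → (∀ q, A q ∈ W q) → (∀ q, B q ∈ W q) →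
        ∀ p, vfLie A B p ∈ Submodule.span ℝ {V₁ p, V₂ p, V₃ p}) ∧
      (∀ (W' : (Fin 5 → ℝ) → Submodule ℝ (Fin 5 → ℝ))
        (A B : (Fin 5 → ℝ) → (Fin 5 → ℝ)), ContDiff ℝ (⊤ : ℕ∞) A →
        ContDiff ℝ (⊤ : ℕ∞) B → (∀ p, LinearIndependent ℝ ![A p, B p]) →
        (∀ p, W' p = Submodule.span ℝ {A p, B p}) →
        (∀ p, X p ∈ W' p) →
        (∀ p, W' p ≤ Submodule.span ℝ {V₁ p, V₂ p, V₃ p}) →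
        (∀ C D : (Fin 5 → ℝ) → (Fin 5 → ℝ), ContDiff ℝ (⊤ : ℕ∞) C →
          ContDiff ℝ (⊤ : ℕ∞) D → (∀ q, C q ∈ W' q) → (∀ q, D q ∈ W' q) →
          ∀ p, vfLie C D p ∈ Submodule.span ℝ {V₁ p, V₂ p, V₃ p}) →
        ∀ p, W' p = W p) := by
  classical
  set Vf : Fin 3 → (Fin 5 → ℝ) → (Fin 5 → ℝ) := ![V₁, V₂, V₃] with hVfdef
  have hVfi : ∀ i, ContDiff ℝ (⊤ : ℕ∞) (Vf i) := by
    intro i; fin_cases i <;> assumption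
  have hVfq : ∀ q, (fun i => Vf i q) = ![V₁ q, V₂ q, V₃ q] := by
    intro q; funext i; fin_cases i <;> rfl
  have hiq : ∀ q, LinearIndependent ℝ (fun i => Vf i q) := by
    intro q; rw [hVfq q]; exact hind q
  set S3 : (Fin 5 → ℝ) → Submodule ℝ (Fin 5 → ℝ) :=
    fun q => Submodule.span ℝ (Set.range fun i => Vf i q) with hS3def
  have hsp : ∀ q, Submodule.span ℝ {V₁ q, V₂ q, V₃ q} = S3 q := by
    intro q
    rw [hS3def]
    congr 1
    rw [hVfq q, range_triple]
  -- the defining maps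
  set Φ : (Fin 5 → ℝ) → (Fin 3 → ℝ) →ₗ[ℝ] (Fin 5 → ℝ) := fun q => lc (fun i => Vf i q) with hΦdef
  set Ψ : (Fin 5 → ℝ) → (Fin 3 → ℝ) →ₗ[ℝ] (Fin 5 → ℝ) :=
    fun q => lc (fun j => vfLie X (Vf j) q) with hΨdef
  set K : (Fin 5 → ℝ) → Submodule ℝ (Fin 3 → ℝ) :=
    fun q => LinearMap.ker ((S3 q).mkQ ∘ₗ Ψ q) with hKdef
  set W : (Fin 5 → ℝ) → Submodule ℝ (Fin 5 → ℝ) :=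
    fun q => Submodule.map (Φ q) (K q) with hWdef
  have hKmem : ∀ q c, c ∈ K q ↔ Ψ q c ∈ S3 q := by
    intro q c
    rw [hKdef]
    simp only [LinearMap.mem_ker, LinearMap.comp_apply, Submodule.mkQ_apply,
      Submodule.Quotient.mk_eq_zero]
  -- tensoriality
  have tens : ∀ (A : (Fin 5 → ℝ) → (Fin 5 → ℝ)), ContDiff ℝ (⊤ : ℕ∞) A →
      (∀ q, A q ∈ S3 q) → ∀ (B : (Fin 5 → ℝ) → (Fin 5 → ℝ)) (pp : Fin 5 → ℝ) (c : Fin 3 → ℝ),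
      (∑ j, c j • Vf j pp = A pp) →
      vfLie A B pp - ∑ j, c j • vfLie (Vf j) B pp ∈ S3 pp :=
    fun A hA hAs B pp c hc => tensorial Vf hVfi pp (hiq pp) A hA hAs B c hc
  have hXsec : ∀ q, X q ∈ S3 q := fun q => (hsp q) ▸ hXmem q
  -- W is contained in S3
  have hWle : ∀ q, W q ≤ S3 q := by
    intro q
    rw [hWdef]
    refine le_trans LinearMap.map_le_range ?_
    rw [hΦdef, lc_range]
  -- rank of K is 2
  have hKrank : ∀ p, Module.finrank ℝ (K p) = 2 := by
    intro p
    have h3 : Module.finrank ℝ (S3 p) = 3 := by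
      rw [hS3def, finrank_span_eq_card (hiq p)]
      simp
    set T6 : Submodule ℝ (Fin 5 → ℝ) :=
      S3 p ⊔ Submodule.span ℝ (Set.range fun j => vfLie X (Vf j) p) with hT6def
    have hL3 : (fun j => vfLie X (Vf j) p) = ![vfLie X V₁ p, vfLie X V₂ p, vfLie X V₃ p] := by
      funext j; fin_cases j <;> rfl
    have hT6 : Submodule.span ℝ
        {V₁ p, V₂ p, V₃ p, vfLie X V₁ p, vfLie X V₂ p, vfLie X V₃ p} = T6 := by
      rw [hT6def, hS3def, ← Submodule.span_union]
      congr 1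
      rw [hVfq p, hL3, range_triple, range_triple]
      ext x
      simp only [Set.mem_union, Set.mem_insert_iff, Set.mem_singleton_iff]
      tauto
    have h4 : Module.finrank ℝ T6 = 4 := by rw [← hT6]; exact hB₁B₃ p
    have hle : S3 p ≤ T6 := le_sup_left
    have hq1 : Module.finrank ℝ (Submodule.map (S3 p).mkQ T6) = 1 := by
      have h6 : Module.finrank ℝ (Submodule.comap T6.subtype (S3 p)) = 3 :=
        (Submodule.comapSubtypeEquivOfLe hle).finrank_eq.trans h3
      have h5 := LinearMap.finrank_range_add_finrank_ker ((S3 p).mkQ ∘ₗ T6.subtype)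
      rw [LinearMap.range_comp, Submodule.range_subtype, LinearMap.ker_comp, Submodule.ker_mkQ,
        h6, h4] at h5
      omega
    have hq2 : LinearMap.range ((S3 p).mkQ ∘ₗ Ψ p) = Submodule.map (S3 p).mkQ T6 := by
      rw [LinearMap.range_comp, hΨdef, lc_range, hT6def, Submodule.map_sup]
      have hbot : Submodule.map (S3 p).mkQ (S3 p) = ⊥ := by
        rw [eq_bot_iff]
        refine le_trans ?_ (le_refl ⊥)
        refine Submodule.map_le_iff_le_comap.mpr ?_
        rw [Submodule.comap_bot, Submodule.ker_mkQ]
      rw [hbot, bot_sup_eq]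
    have h7 := LinearMap.finrank_range_add_finrank_ker ((S3 p).mkQ ∘ₗ Ψ p)
    rw [hq2, hq1, Module.finrank_fin_fun] at h7
    have hres : Module.finrank ℝ (LinearMap.ker ((S3 p).mkQ ∘ₗ Ψ p)) = 2 := by omega
    exact hres
  have hWrank : ∀ p, Module.finrank ℝ (W p) = 2 := by
    intro p
    have he : Module.finrank ℝ (Submodule.map (Φ p) (K p)) = Module.finrank ℝ (K p) :=
      (Submodule.equivMapOfInjective (Φ p) (lc_inj _ (hiq p)) (K p)).symm.finrank_eq
    rw [hWdef]
    exact he.trans (hKrank p)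
  have hXW : ∀ p, X p ∈ W p := by
    intro p
    obtain ⟨ξ, hξ⟩ := (Submodule.mem_span_range_iff_exists_fun ℝ).mp (hXsec p)
    refine Submodule.mem_map.mpr ⟨ξ, ?_, hξ⟩
    rw [hKmem]
    have ht := tens X hX hXsec X p ξ hξ
    have heq : Ψ p ξ = vfLie X X p - ∑ j, ξ j • vfLie (Vf j) X p := by
      rw [hΨdef]
      simp [lc_apply, vfLie, smul_sub, Finset.sum_sub_distrib]
    rw [heq]
    exact ht
  have hchar : ∀ p, (W p : Set (Fin 5 → ℝ)) =
      {v | v ∈ Submodule.span ℝ {V₁ p, V₂ p, V₃ p} ∧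
        ∀ A : (Fin 5 → ℝ) → (Fin 5 → ℝ), ContDiff ℝ (⊤ : ℕ∞) A →
          (∀ q, A q ∈ Submodule.span ℝ {V₁ q, V₂ q, V₃ q}) → A p = v →
          vfLie X A p ∈ Submodule.span ℝ {V₁ p, V₂ p, V₃ p}} := by
    intro p
    ext v
    simp only [SetLike.mem_coe, Set.mem_setOf_eq]
    constructor
    · intro hv
      obtain ⟨c, hcK, hcv⟩ := Submodule.mem_map.mp hv
      constructor
      · rw [hsp p]
        exact hWle p hv
      · intro A hA hAsec hAp
        have hAsec' : ∀ q, A q ∈ S3 q := fun q => (hsp q) ▸ hAsec q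
        have ht := tens A hA hAsec' X p c (by rw [hAp, ← hcv]; rfl)
        have h9 : Ψ p c ∈ S3 p := (hKmem p c).mp hcK
        have h8 : vfLie X A p - Ψ p c
            = -(vfLie A X p - ∑ j, c j • vfLie (Vf j) X p) := by
          rw [hΨdef]
          simp [lc_apply, vfLie, smul_sub, Finset.sum_sub_distrib]
          abel
        have h10 : vfLie X A p - Ψ p c ∈ S3 p := by
          rw [h8]; exact Submodule.neg_mem _ ht
        rw [hsp p]
        have := Submodule.add_mem _ h10 h9
        simpa using this
    · rintro ⟨hv1, hv2⟩
      rw [hsp p, hS3def] at hv1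
      obtain ⟨c, hc⟩ := (Submodule.mem_span_range_iff_exists_fun ℝ).mp hv1
      refine Submodule.mem_map.mpr ⟨c, ?_, hc⟩
      rw [hKmem]
      have hAc : ContDiff ℝ (⊤ : ℕ∞) (fun q => ∑ j, c j • Vf j q) :=
        ContDiff.sum fun j _ => (hVfi j).const_smul (c j)
      have hAsec : ∀ q, (fun q => ∑ j, c j • Vf j q) q ∈ Submodule.span ℝ {V₁ q, V₂ q, V₃ q} := by
        intro q
        rw [hsp q, hS3def]
        exact Submodule.sum_mem _ fun j _ => Submodule.smul_mem _ _
          (Submodule.subset_span (Set.mem_range_self j))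
      have hv3 := hv2 _ hAc hAsec hc
      rw [hsp p] at hv3
      have heq : vfLie X (fun q => ∑ j, c j • Vf j q) p = Ψ p c := by
        rw [hΨdef, vfLie_sum_right X Vf p
          (fun j => ((hVfi j).differentiable (by simp)).differentiableAt) c]
        rfl
      rwa [heq] at hv3
  have hle4 : ∀ p, W p ≤ Submodule.span ℝ {V₁ p, V₂ p, V₃ p} := by
    intro p
    rw [hsp p]
    exact hWle p
  have hclosed : ∀ A B : (Fin 5 → ℝ) → (Fin 5 → ℝ), ContDiff ℝ (⊤ : ℕ∞) A →
      ContDiff ℝ (⊤ : ℕ∞) B → (∀ q, A q ∈ W q) → (∀ q, B q ∈ W q) →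
      ∀ p, vfLie A B p ∈ Submodule.span ℝ {V₁ p, V₂ p, V₃ p} := by
    intro A B hA hB hAW hBW p
    rw [hsp p]
    obtain ⟨α, hαK, hαv⟩ := Submodule.mem_map.mp (hAW p)
    obtain ⟨β, hβK, hβv⟩ := Submodule.mem_map.mp (hBW p)
    obtain ⟨ξ, hξK, hξv⟩ := Submodule.mem_map.mp (hXW p)
    set L : Fin 3 → Fin 3 → (Fin 5 → ℝ) := fun i j => vfLie (Vf i) (Vf j) p with hLdef
    have hLanti : ∀ i j, L i j = -L j i := by
      intro i j; rw [hLdef]; simp [vfLie]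
    have hAsec : ∀ q, A q ∈ S3 q := fun q => hWle q (hAW q)
    have hBsec : ∀ q, B q ∈ S3 q := fun q => hWle q (hBW q)
    have hqξ : ∀ d, d ∈ K p → qmap L ξ d ∈ S3 p := by
      intro d hd
      have t3 : ∀ j, vfLie X (Vf j) p - ∑ i, ξ i • vfLie (Vf i) (Vf j) p ∈ S3 p :=
        fun j => tens X hX hXsec (Vf j) p ξ hξv
      have hswap : qmap L ξ d = ∑ j, d j • ∑ i, ξ i • vfLie (Vf i) (Vf j) p := by
        rw [qmap_apply, Finset.sum_comm]
        simp [Finset.smul_sum, smul_smul, mul_comm]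
        rfl
      have hmem2 : qmap L ξ d - Ψ p d ∈ S3 p := by
        rw [hswap, hΨdef, lc_apply, ← Finset.sum_sub_distrib]
        refine Submodule.sum_mem _ fun j _ => ?_
        rw [← smul_sub]
        refine Submodule.smul_mem _ _ ?_
        have := Submodule.neg_mem _ (t3 j)
        rwa [neg_sub] at this
      have := Submodule.add_mem _ hmem2 ((hKmem p d).mp hd)
      simpa using this
    have t1 := tens A hA hAsec B p α hαv
    have t2 : ∀ i, vfLie (Vf i) B p - ∑ j, β j • vfLie (Vf i) (Vf j) p ∈ S3 p := by
      intro i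
      have h := tens B hB hBsec (Vf i) p β hβv
      have heq : vfLie (Vf i) B p - ∑ j, β j • vfLie (Vf i) (Vf j) p
          = -(vfLie B (Vf i) p - ∑ j, β j • vfLie (Vf j) (Vf i) p) := by
        simp [vfLie, smul_sub, Finset.sum_sub_distrib]
        abel
      rw [heq]
      exact Submodule.neg_mem _ h
    have hF1 : vfLie A B p - qmap L α β ∈ S3 p := by
      have hid : vfLie A B p - qmap L α β
          = (vfLie A B p - ∑ i, α i • vfLie (Vf i) B p)
            + ∑ i, α i • (vfLie (Vf i) B p - ∑ j, β j • vfLie (Vf i) (Vf j) p) := by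
        rw [qmap_apply]
        simp [smul_sub, Finset.sum_sub_distrib, Finset.smul_sum, smul_smul]
        rfl
      rw [hid]
      exact Submodule.add_mem _ t1
        (Submodule.sum_mem _ fun i _ => Submodule.smul_mem _ _ (t2 i))
    have hF5 : qmap L α β ∈ S3 p := by
      by_cases hcase : ∃ t : ℝ, α = t • ξ
      · obtain ⟨t, rfl⟩ := hcase
        have hts : qmap L (t • ξ) β = t • qmap L ξ β := by
          rw [map_smul]; rfl
        rw [hts]
        exact Submodule.smul_mem _ _ (hqξ β hβK)
      · have hξ0 : ξ ≠ 0 := by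
          rintro rfl
          exact hX0 p (by rw [← hξv]; exact map_zero _)
        have hind2 : LinearIndependent ℝ ![α, ξ] := by
          rw [linearIndependent_fin2]
          refine ⟨by simpa using hξ0, ?_⟩
          intro a ha
          exact hcase ⟨a, by simpa using ha.symm⟩
        have hsub : Submodule.span ℝ (Set.range ![α, ξ]) ≤ K p := by
          rw [Submodule.span_le, range_pair]
          intro x hx
          rcases hx with rfl | hx
          · exact hαK
          · rw [Set.mem_singleton_iff] at hx
            subst hx
            exact hξK
        have hspan2 : Submodule.span ℝ (Set.range ![α, ξ]) = K p := by
          apply Submodule.eq_of_le_of_finrank_eq hsub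
          rw [finrank_span_eq_card hind2, hKrank p]
          simp
        have hβmem : β ∈ Submodule.span ℝ ({α, ξ} : Set (Fin 3 → ℝ)) := by
          rw [← range_pair, hspan2]
          exact hβK
        obtain ⟨s, t, hst⟩ := Submodule.mem_span_pair.mp hβmem
        have hexp : qmap L α β = s • qmap L α α + t • qmap L α ξ := by
          rw [← hst]
          simp [map_add, map_smul]
        rw [hexp, qmap_self L hLanti α, qmap_anti L hLanti α ξ]
        simp only [smul_zero, zero_add, smul_neg]
        exact Submodule.neg_mem _ (Submodule.smul_mem _ _ (hqξ α hαK))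
    have := Submodule.add_mem _ hF1 hF5
    simpa using this
  refine ⟨W, hchar, hWrank, hXW, hle4, hclosed, ?_⟩
  intro W' A B hA hB hABind hW'span hXW' hW'le hW'closed p
  have hz : W' p ≤ W p := by
    intro v hv
    have hvs : v ∈ Submodule.span ℝ ({A p, B p} : Set (Fin 5 → ℝ)) := by
      rw [← hW'span p]; exact hv
    obtain ⟨s, t, hst⟩ := Submodule.mem_span_pair.mp hvs
    have hv3 : v ∈ Submodule.span ℝ {V₁ p, V₂ p, V₃ p} := hW'le p hv
    have hvset : v ∈ (W p : Set (Fin 5 → ℝ)) := by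
      rw [hchar p]
      refine ⟨hv3, ?_⟩
      intro C hC hCsec hCp
      have hDc : ContDiff ℝ (⊤ : ℕ∞) (fun q => s • A q + t • B q) :=
        (hA.const_smul s).add (hB.const_smul t)
      have hDsec : ∀ q, (fun q => s • A q + t • B q) q ∈ S3 q := by
        intro q
        have hAq : A q ∈ S3 q := by
          rw [← hsp q]
          refine hW'le q ?_
          rw [hW'span q]
          exact Submodule.subset_span (by simp)
        have hBq : B q ∈ S3 q := by
          rw [← hsp q]
          refine hW'le q ?_
          rw [hW'span q]
          exact Submodule.subset_span (by simp)
        exact Submodule.add_mem _ (Submodule.smul_mem _ _ hAq) (Submodule.smul_mem _ _ hBq)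
      have hv3' : v ∈ S3 p := by rw [← hsp p]; exact hv3
      obtain ⟨c, hcv⟩ := (Submodule.mem_span_range_iff_exists_fun ℝ).mp hv3'
      have hCsec' : ∀ q, C q ∈ S3 q := fun q => (hsp q) ▸ hCsec q
      have t1 := tens C hC hCsec' X p c (by rw [hCp]; exact hcv)
      have t2 := tens (fun q => s • A q + t • B q) hDc hDsec X p c
        (by simpa using hcv.trans hst.symm)
      have h10 : vfLie C X p - vfLie (fun q => s • A q + t • B q) X p ∈ S3 p := by
        have := Submodule.sub_mem _ t1 t2
        rwa [sub_sub_sub_cancel_right] at this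
      have h11 : vfLie X C p - vfLie X (fun q => s • A q + t • B q) p ∈ S3 p := by
        have heq : vfLie X C p - vfLie X (fun q => s • A q + t • B q) p
            = -(vfLie C X p - vfLie (fun q => s • A q + t • B q) X p) := by
          simp [vfLie]
          abel
        rw [heq]
        exact Submodule.neg_mem _ h10
      have h12 : vfLie X (fun q => s • A q + t • B q) p
          = s • vfLie X A p + t • vfLie X B p :=
        vfLie_comb_right X A B p
          ((hA.differentiable (by simp)).differentiableAt)
          ((hB.differentiable (by simp)).differentiableAt) s t
      have h13 : vfLie X A p ∈ S3 p := by
        rw [← hsp p]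
        exact hW'closed X A hX hA (fun q => hXW' q)
          (fun q => by rw [hW'span q]; exact Submodule.subset_span (by simp)) p
      have h14 : vfLie X B p ∈ S3 p := by
        rw [← hsp p]
        exact hW'closed X B hX hB (fun q => hXW' q)
          (fun q => by rw [hW'span q]; exact Submodule.subset_span (by simp)) p
      have hfin : vfLie X C p ∈ S3 p := by
        have heq2 : vfLie X C p = (vfLie X C p - vfLie X (fun q => s • A q + t • B q) p)
            + (s • vfLie X A p + t • vfLie X B p) := by
          rw [← h12]
          abel
        rw [heq2]
        exact Submodule.add_mem _ h11
          (Submodule.add_mem _ (Submodule.smul_mem _ _ h13) (Submodule.smul_mem _ _ h14))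
      rw [hsp p]
      exact hfin
    exact hvset
  apply Submodule.eq_of_le_of_finrank_eq hz
  rw [hWrank p, hW'span p, ← range_pair (A p) (B p), finrank_span_eq_card (hABind p)]
  simp
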